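/- Let q > 0 and let φ: ℝⁿ → (0, ∞) be a positive convex function. Then ∫_{ℝⁿ} φ^{-(n+q)} < ∞ if and only if φ(x) → +∞ as |x| → ∞. Moreover, in this case there exist α, β > 0 with φ(x) ≥ α + β|x| for all x ∈ ℝⁿ. -/

import Mathlib

open MeasureTheory Filter Metric
open scoped ENNReal Topology

noncomputable section

abbrev En (n : ℕ) := EuclideanSpace ℝ (Fin n)

lemma phi_cont {n : ℕ} {φ : En n → ℝ} (hconv : ConvexOn ℝ Set.univ φ) : Continuous φ := by
  rw [← continuousOn_univ]
  exact hconv.continuousOn isOpen_univ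

lemma lin_bound {n : ℕ} {φ : En n → ℝ} (hconv : ConvexOn ℝ Set.univ φ)
    (hpos : ∀ x, 0 < φ x) (ht : Tendsto φ (comap norm atTop) atTop) :
    ∃ α > (0:ℝ), ∃ β > (0:ℝ), ∀ x : En n, α + β * ‖x‖ ≤ φ x := by
  have hev : ∀ᶠ x in comap norm atTop, φ 0 + 1 ≤ φ x := ht.eventually (eventually_ge_atTop _)
  rw [eventually_comap] at hev
  obtain ⟨R0, hR0⟩ := eventually_atTop.mp hev
  set R : ℝ := max R0 1 with hRdef
  have hR1 : (1:ℝ) ≤ R := le_max_right _ _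
  have hRpos : (0:ℝ) < R := lt_of_lt_of_le one_pos hR1
  have key : ∀ x : En n, R ≤ ‖x‖ → φ 0 + ‖x‖ / R ≤ φ x := by
    intro x hx
    have hxpos : 0 < ‖x‖ := lt_of_lt_of_le hRpos hx
    set l : ℝ := R / ‖x‖ with hl
    have hl0 : 0 < l := div_pos hRpos hxpos
    have hl1 : l ≤ 1 := (div_le_one hxpos).2 hx
    have hy : φ (l • x) ≤ (1 - l) * φ 0 + l * φ x := by
      have := hconv.2 (Set.mem_univ (0 : En n)) (Set.mem_univ x)
        (by linarith : (0:ℝ) ≤ 1 - l) hl0.le (by ring)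
      simpa using this
    have hyn : ‖l • x‖ = R := by
      rw [norm_smul, Real.norm_of_nonneg hl0.le, hl, div_mul_cancel₀ _ hxpos.ne']
    have h2 : φ 0 + 1 ≤ φ (l • x) :=
      hR0 R (le_max_left _ _) (l • x) hyn
    have hmul : l * (‖x‖ / R) = 1 := by
      rw [hl]; field_simp
    nlinarith [hpos x, hpos 0, div_nonneg (norm_nonneg x) hRpos.le]
  obtain ⟨z, hz, hzmin⟩ := (isCompact_closedBall (0 : En n) R).exists_isMinOn
    (nonempty_closedBall.mpr hRpos.le) (phi_cont hconv).continuousOn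
  set m := φ z with hmdef
  have hm : 0 < m := hpos z
  have hm0 : m ≤ φ 0 := hzmin (mem_closedBall_self hRpos.le)
  refine ⟨m/2, by positivity, min (m/(2*R)) (1/R), by positivity, fun x => ?_⟩
  rcases le_or_gt ‖x‖ R with h | h
  · have hx : m ≤ φ x := hzmin (by simpa [mem_closedBall, dist_zero_right] using h)
    have h1 : min (m/(2*R)) (1/R) * ‖x‖ ≤ (m/(2*R)) * R :=
      mul_le_mul (min_le_left _ _) h (norm_nonneg x) (by positivity)
    have h2 : (m/(2*R)) * R = m/2 := by field_simp
    linarith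
  · have hk := key x h.le
    have h1 : min (m/(2*R)) (1/R) * ‖x‖ ≤ (1/R) * ‖x‖ :=
      mul_le_mul_of_nonneg_right (min_le_right _ _) (norm_nonneg x)
    have h2 : (1/R) * ‖x‖ = ‖x‖ / R := by ring
    linarith

lemma finite_of_lin {n : ℕ} {φ : En n → ℝ} (q : ℝ) (hq : 0 < q) (hpos : ∀ x, 0 < φ x)
    {α β : ℝ} (hα : 0 < α) (hβ : 0 < β) (hb : ∀ x : En n, α + β * ‖x‖ ≤ φ x) :
    (∫⁻ x, ENNReal.ofReal (φ x ^ (-((n:ℝ) + q)))) < ⊤ := by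
  set p : ℝ := (n:ℝ) + q with hp
  have hp0 : 0 < p := by positivity
  set c : ℝ := min α β with hc
  have hc0 : 0 < c := lt_min hα hβ
  have hpt : ∀ x : En n, ENNReal.ofReal (φ x ^ (-p)) ≤
      ENNReal.ofReal (c ^ (-p)) * ENNReal.ofReal ((1 + ‖x‖) ^ (-p)) := by
    intro x
    rw [← ENNReal.ofReal_mul (by positivity), ← Real.mul_rpow hc0.le (by positivity)]
    apply ENNReal.ofReal_le_ofReal
    apply Real.rpow_le_rpow_of_nonpos (by positivity) _ (by linarith)
    have h1 : c * (1 + ‖x‖) = c + c * ‖x‖ := by ring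
    have h2 : c ≤ α := min_le_left _ _
    have h3 : c * ‖x‖ ≤ β * ‖x‖ :=
      mul_le_mul_of_nonneg_right (min_le_right _ _) (norm_nonneg x)
    have := hb x
    linarith
  calc (∫⁻ x, ENNReal.ofReal (φ x ^ (-p)))
      ≤ ∫⁻ x : En n, ENNReal.ofReal (c ^ (-p)) * ENNReal.ofReal ((1 + ‖x‖) ^ (-p)) :=
        lintegral_mono hpt
    _ = ENNReal.ofReal (c ^ (-p)) * ∫⁻ x : En n, ENNReal.ofReal ((1 + ‖x‖) ^ (-p)) :=
        lintegral_const_mul' _ _ ENNReal.ofReal_ne_top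
    _ < ⊤ := by
        apply ENNReal.mul_lt_top ENNReal.ofReal_lt_top
        apply finite_integral_one_add_norm
        rw [finrank_euclideanSpace_fin]
        linarith

lemma tendsto_of_finite {n : ℕ} {φ : En n → ℝ} (q : ℝ) (hq : 0 < q)
    (hconv : ConvexOn ℝ Set.univ φ) (hpos : ∀ x, 0 < φ x)
    (hfin : (∫⁻ x, ENNReal.ofReal (φ x ^ (-((n:ℝ) + q)))) < ⊤) :
    Tendsto φ (comap norm atTop) atTop := by
  set p : ℝ := (n:ℝ) + q with hp
  have hp0 : 0 < p := by positivity
  by_contra hns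
  rw [Filter.tendsto_atTop] at hns
  push_neg at hns
  obtain ⟨M, hM⟩ := hns
  simp only [← not_le] at hM
  have hseq : ∀ k : ℕ, ∃ x : En n, (k:ℝ) + 1 ≤ ‖x‖ ∧ ¬ M ≤ φ x := by
    intro k
    obtain ⟨x, hx1, hx2⟩ := Filter.frequently_iff.mp hM
      (preimage_mem_comap (Ici_mem_atTop ((k:ℝ) + 1)))
    exact ⟨x, hx1, hx2⟩
  choose x hx1 hx2 using hseq
  have hnorm : ∀ k, 0 < ‖x k‖ := fun k =>
    lt_of_lt_of_le (by positivity) (hx1 k)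
  set M' : ℝ := max M (φ 0) with hM'
  have hφ0M' : φ 0 ≤ M' := le_max_right _ _
  set u : ℕ → En n := fun k => ‖x k‖⁻¹ • x k with hu
  have husph : ∀ k, u k ∈ sphere (0 : En n) 1 := by
    intro k
    simp [hu, mem_sphere_zero_iff_norm, norm_smul, abs_of_pos (inv_pos.2 (hnorm k)),
      inv_mul_cancel₀ (hnorm k).ne']
  obtain ⟨v, hv, ψ, hψ, hlim⟩ := (isCompact_sphere (0 : En n) 1).tendsto_subseq husph
  have hray : ∀ t : ℝ, 0 ≤ t → φ (t • v) ≤ M' := by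
    intro t ht
    have hb : ∀ k, t ≤ ‖x k‖ → φ (t • u k) ≤ M' := by
      intro k hk
      set l : ℝ := t / ‖x k‖ with hl
      have hl0 : 0 ≤ l := div_nonneg ht (hnorm k).le
      have hl1 : l ≤ 1 := (div_le_one (hnorm k)).2 hk
      have heq : t • u k = (1 - l) • (0 : En n) + l • (x k) := by
        simp [hu, smul_smul, hl, div_eq_mul_inv]
      have hcx := hconv.2 (Set.mem_univ (0 : En n)) (Set.mem_univ (x k))
        (by linarith : (0:ℝ) ≤ 1 - l) hl0 (by ring)
      rw [← heq] at hcx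
      simp only [smul_eq_mul] at hcx
      have h1 : (1 - l) * φ 0 ≤ (1 - l) * M' :=
        mul_le_mul_of_nonneg_left hφ0M' (by linarith)
      have h2 : l * φ (x k) ≤ l * M' :=
        mul_le_mul_of_nonneg_left ((not_le.mp (hx2 k)).le.trans (le_max_left _ _)) hl0
      nlinarith
    have hlim2 : Tendsto (fun k => φ (t • u (ψ k))) atTop (𝓝 (φ (t • v))) :=
      ((phi_cont hconv).tendsto (t • v)).comp (hlim.const_smul t)
    apply le_of_tendsto hlim2
    filter_upwards [eventually_ge_atTop ⌈t⌉₊] with k hk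
    apply hb
    calc t ≤ (⌈t⌉₊ : ℝ) := Nat.le_ceil t
      _ ≤ (k : ℝ) := by exact_mod_cast hk
      _ ≤ (ψ k : ℝ) := by exact_mod_cast hψ.id_le k
      _ ≤ (ψ k : ℝ) + 1 := by linarith
      _ ≤ ‖x (ψ k)‖ := hx1 _
  obtain ⟨w, hw, hwmax⟩ := (isCompact_closedBall (0 : En n) 1).exists_isMaxOn
    (nonempty_closedBall.mpr zero_le_one) (phi_cont hconv).continuousOn
  set K : ℝ := max M' (φ w) with hK
  have hK0 : 0 < K := lt_of_lt_of_le (hpos 0) (hφ0M'.trans (le_max_left _ _))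
  have hcyl : ∀ t : ℝ, 0 ≤ t → ∀ y : En n, ‖y‖ < 1/2 → φ (t • v + y) ≤ K := by
    intro t ht y hy
    have h1 : φ ((2*t) • v) ≤ M' := hray _ (by linarith)
    have h2 : φ ((2:ℝ) • y) ≤ φ w := by
      apply hwmax
      simp only [Set.mem_setOf_eq, mem_closedBall, dist_zero_right, norm_smul,
        Real.norm_ofNat]
      linarith
    have heq : t • v + y = (1/2 : ℝ) • ((2*t) • v) + (1/2 : ℝ) • ((2:ℝ) • y) := by
      module
    have hcx := hconv.2 (Set.mem_univ ((2*t) • v)) (Set.mem_univ ((2:ℝ) • y))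
      (by norm_num : (0:ℝ) ≤ 1/2) (by norm_num : (0:ℝ) ≤ 1/2) (by norm_num)
    rw [← heq] at hcx
    simp only [smul_eq_mul] at hcx
    have := le_max_left M' (φ w)
    have := le_max_right M' (φ w)
    nlinarith
  set U : Set (En n) := ⋃ k : ℕ, ball ((k:ℝ) • v) (1/2) with hU
  have hUsub : ∀ z ∈ U, φ z ≤ K := by
    intro z hz
    obtain ⟨k, hk⟩ := Set.mem_iUnion.mp hz
    have hk' : ‖z - (k:ℝ) • v‖ < 1/2 := by
      rwa [mem_ball, dist_eq_norm] at hk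
    have : ((k:ℝ)) • v + (z - (k:ℝ) • v) = z := by abel
    calc φ z = φ ((k:ℝ) • v + (z - (k:ℝ) • v)) := by rw [this]
      _ ≤ K := hcyl _ (by positivity) _ hk'
  have hvnorm : ‖v‖ = 1 := by rwa [mem_sphere_zero_iff_norm] at hv
  have hdisj : Pairwise (Function.onFun Disjoint fun k : ℕ => ball ((k:ℝ) • v) (1/2)) := by
    intro i j hij
    apply ball_disjoint_ball
    have hij' : (i:ℤ) ≠ j := by exact_mod_cast hij
    have h1 : (1:ℤ) ≤ |(i:ℤ) - j| := Int.one_le_abs (sub_ne_zero.2 hij')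
    have h1' : (1:ℝ) ≤ |(i:ℝ) - j| := by exact_mod_cast h1
    rw [dist_eq_norm, ← sub_smul, norm_smul, hvnorm, Real.norm_eq_abs]
    linarith
  have hUmeas : MeasurableSet U :=
    MeasurableSet.iUnion fun k => measurableSet_ball
  have hUvol : volume U = ⊤ := by
    rw [hU, measure_iUnion hdisj fun k => measurableSet_ball]
    have hcenter : ∀ k : ℕ, volume (ball ((k:ℝ) • v) (1/2)) = volume (ball (0 : En n) (1/2)) :=
      fun k => Measure.addHaar_ball_center volume _ _
    simp_rw [hcenter]
    exact ENNReal.tsum_const_eq_top_of_ne_zero (measure_ball_pos volume _ (by norm_num)).ne'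
  have hle : ∀ z : En n, U.indicator (fun _ => ENNReal.ofReal (K ^ (-p))) z ≤
      ENNReal.ofReal (φ z ^ (-p)) := by
    intro z
    by_cases hz : z ∈ U
    · rw [Set.indicator_of_mem hz]
      apply ENNReal.ofReal_le_ofReal
      exact Real.rpow_le_rpow_of_nonpos (hpos z) (hUsub z hz) (by linarith)
    · rw [Set.indicator_of_notMem hz]
      exact zero_le
  have htop : (∫⁻ z, ENNReal.ofReal (φ z ^ (-p))) = ⊤ := by
    apply top_le_iff.mp
    calc (⊤ : ℝ≥0∞) = ENNReal.ofReal (K ^ (-p)) * volume U := by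
          rw [hUvol, ENNReal.mul_top]
          exact (ENNReal.ofReal_pos.mpr (by positivity)).ne'
      _ = ∫⁻ z, U.indicator (fun _ => ENNReal.ofReal (K ^ (-p))) z := by
          rw [lintegral_indicator hUmeas, setLIntegral_const]
      _ ≤ ∫⁻ z, ENNReal.ofReal (φ z ^ (-p)) := lintegral_mono hle
  rw [htop] at hfin
  exact lt_irrefl _ hfin

theorem statement10 {n : ℕ} (q : ℝ) (hq : 0 < q) (φ : En n → ℝ)
    (hconv : ConvexOn ℝ Set.univ φ) (hpos : ∀ x, 0 < φ x) :
    ((∫⁻ x, ENNReal.ofReal (φ x ^ (-((n : ℝ) + q)))) < ⊤ ↔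
      Tendsto φ (comap norm atTop) atTop) ∧
    ((∫⁻ x, ENNReal.ofReal (φ x ^ (-((n : ℝ) + q)))) < ⊤ →
      ∃ α > (0 : ℝ), ∃ β > (0 : ℝ), ∀ x : En n, α + β * ‖x‖ ≤ φ x) := by
  constructor
  · constructor
    · exact tendsto_of_finite q hq hconv hpos
    · intro ht
      obtain ⟨α, hα, β, hβ, hb⟩ := lin_bound hconv hpos ht
      exact finite_of_lin q hq hpos hα hβ hb
  · intro hfin
    exact lin_bound hconv hpos (tendsto_of_finite q hq hconv hpos hfin)
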